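/- Let n ≥ 1 and let G be an additive abelian group such that the subgroup 2^(n+1)·G = {2^(n+1)·g : g ∈ G} has finite index in G. Then for all sequences f_1, …, f_n : ℕ → G there exist m ≥ 1 and natural numbers t(1) < t(2) < … < t(m) such that for every i ∈ {1, …, n}, the sum f_i(t(1)) + f_i(t(2)) + … + f_i(t(m)) belongs to 2^(n+1)·G; moreover one can take m = 2^(n+1). -/
import Mathlib


/-- The subgroup `N • G = {N • g : g ∈ G}` of an additive abelian group `G`. -/
def nsmulSubgroup (G : Type*) [AddCommGroup G] (N : ℕ) : AddSubgroup G where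
  carrier := {x : G | ∃ g : G, N • g = x}
  zero_mem' := ⟨0, smul_zero N⟩
  add_mem' := by
    rintro a b ⟨x, rfl⟩ ⟨y, rfl⟩
    exact ⟨x + y, smul_add N x y⟩
  neg_mem' := by
    rintro a ⟨x, rfl⟩
    exact ⟨-x, smul_neg N x⟩

theorem stmt_4 (n : ℕ) (hn : 1 ≤ n) (G : Type*) [AddCommGroup G]
    (hfin : Finite (G ⧸ nsmulSubgroup G (2 ^ (n + 1))))
    (f : Fin n → ℕ → G) :
    ∃ m : ℕ, m = 2 ^ (n + 1) ∧ 1 ≤ m ∧ ∃ t : Fin m → ℕ, StrictMono t ∧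
      ∀ i : Fin n, (∑ j : Fin m, f i (t j)) ∈ nsmulSubgroup G (2 ^ (n + 1)) := by
  set N := 2 ^ (n + 1) with hN
  set H := nsmulSubgroup G N with hH
  -- the map recording the residue classes of all the f i at index k
  set φ : ℕ → (Fin n → G ⧸ H) := fun k i => QuotientAddGroup.mk (f i k) with hφ
  have : Finite (Fin n → G ⧸ H) := Pi.finite
  obtain ⟨c, hc⟩ := Finite.exists_infinite_fiber φ
  have hinf : {k | φ k = c}.Infinite := by
    rw [Set.infinite_coe_iff] at hc
    exact hc
  refine ⟨N, rfl, Nat.one_le_two_pow, fun j => Nat.nth (fun k => φ k = c) j.1, ?_, ?_⟩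
  · exact fun a b hab => (Nat.nth_strictMono hinf) (by exact_mod_cast hab)
  · intro i
    have hmem : ∀ j : Fin N, φ (Nat.nth (fun k => φ k = c) j.1) = c :=
      fun j => Nat.nth_mem_of_infinite hinf j.1
    rw [← QuotientAddGroup.eq_zero_iff]
    have : ((QuotientAddGroup.mk (∑ j : Fin N,
        f i (Nat.nth (fun k => φ k = c) j.1)) : G ⧸ H)) = ∑ j : Fin N, (c i) := by
      rw [QuotientAddGroup.mk_sum]
      refine Finset.sum_congr rfl fun j _ => ?_
      have := hmem j
      exact congrFun this i
    rw [this, Finset.sum_const, Finset.card_univ, Fintype.card_fin]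
    obtain ⟨g, hg⟩ := QuotientAddGroup.mk_surjective (c i)
    rw [← hg, ← QuotientAddGroup.mk_nsmul, QuotientAddGroup.eq_zero_iff]
    exact ⟨g, rfl⟩
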